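/- Let {H_{ij} : 1 ≤ i,j ≤ n} be independent real random variables with E[H_{ij}] = 0, E[H_{ij}²] ≤ σ², and |H_{ij}| ≤ B almost surely. Let k ≥ 2 and p ≥ 1 be integers, and for each r ∈ [p] let j^{(r)} ∈ [n]^{k+1}, with ζ_r := H_{j^{(r)}_1 j^{(r)}_2} ⋯ H_{j^{(r)}_k j^{(r)}_{k+1}}. Suppose that among the pk index pairs { (j^{(r)}_l, j^{(r)}_{l+1}) : r ∈ [p], l ∈ [k] } there are exactly L distinct ordered pairs and each of these L distinct pairs occurs at least twice. Then | E[ ∏_{r=1}^{p} ( ζ_r − E[ζ_r] ) ] | ≤ 2^p σ^{2L} B^{pk − 2L}. -/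

import Mathlib

open MeasureTheory ProbabilityTheory

section aux
variable {Ω : Type} [MeasurableSpace Ω] {μ : Measure Ω} [IsProbabilityMeasure μ]
  {n : ℕ} {H : Fin n → Fin n → Ω → ℝ} {B : ℝ}

lemma stmt16_int_pow (hmeas : ∀ i j, Measurable (H i j))
    (hbdd : ∀ i j, ∀ᵐ ω ∂μ, |H i j ω| ≤ B) (q : Fin n × Fin n) (m : ℕ) :
    Integrable (fun ω => H q.1 q.2 ω ^ m) μ := by
  refine (integrable_const (B ^ m)).mono'
    ((hmeas q.1 q.2).pow_const m).aestronglyMeasurable ?_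
  filter_upwards [hbdd q.1 q.2] with ω hω
  rw [Real.norm_eq_abs, abs_pow]
  exact pow_le_pow_left₀ (abs_nonneg _) hω m

lemma stmt16_int_prod (hmeas : ∀ i j, Measurable (H i j))
    (hbdd : ∀ i j, ∀ᵐ ω ∂μ, |H i j ω| ≤ B)
    (c : Fin n × Fin n → ℕ) (s : Finset (Fin n × Fin n)) :
    Integrable (fun ω => ∏ q ∈ s, H q.1 q.2 ω ^ c q) μ := by
  refine (integrable_const (∏ q ∈ s, B ^ c q)).mono'
    (Finset.measurable_prod s fun q _ => (hmeas q.1 q.2).pow_const (c q)).aestronglyMeasurable ?_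
  have h : ∀ᵐ ω ∂μ, ∀ q : Fin n × Fin n, |H q.1 q.2 ω| ≤ B :=
    ae_all_iff.2 fun q => hbdd q.1 q.2
  filter_upwards [h] with ω hω
  rw [Real.norm_eq_abs, Finset.abs_prod]
  refine Finset.prod_le_prod (fun q _ => abs_nonneg _) fun q _ => ?_
  rw [abs_pow]
  exact pow_le_pow_left₀ (abs_nonneg _) (hω q) (c q)

lemma stmt16_fact (hmeas : ∀ i j, Measurable (H i j))
    (hindep : iIndepFun (fun q : Fin n × Fin n => H q.1 q.2) μ)
    (hbdd : ∀ i j, ∀ᵐ ω ∂μ, |H i j ω| ≤ B)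
    (c : Fin n × Fin n → ℕ) (s : Finset (Fin n × Fin n)) :
    ∫ ω, ∏ q ∈ s, H q.1 q.2 ω ^ c q ∂μ = ∏ q ∈ s, ∫ ω, H q.1 q.2 ω ^ c q ∂μ := by
  classical
  have hind2 : iIndepFun
      (fun q : Fin n × Fin n => fun ω => H q.1 q.2 ω ^ c q) μ :=
    hindep.comp (fun q x => x ^ c q) (fun q => measurable_id.pow_const (c q))
  induction s using Finset.induction_on with
  | empty => simp
  | @insert a s ha ih =>
    have hXY : IndepFun (fun ω => ∏ q ∈ s, H q.1 q.2 ω ^ c q)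
        (fun ω => H a.1 a.2 ω ^ c a) μ := by
      have := hind2.indepFun_finsetProd_of_notMem
        (fun q => (hmeas q.1 q.2).pow_const (c q)) ha
      have heq : (∏ j ∈ s, fun ω => H j.1 j.2 ω ^ c j)
          = fun ω => ∏ q ∈ s, H q.1 q.2 ω ^ c q := by
        funext ω; simp [Finset.prod_apply]
      rwa [heq] at this
    have hmul : (fun ω => ∏ q ∈ insert a s, H q.1 q.2 ω ^ c q)
        = (fun ω => ∏ q ∈ s, H q.1 q.2 ω ^ c q) * (fun ω => H a.1 a.2 ω ^ c a) := by
      funext ω; simp [Finset.prod_insert ha, mul_comm]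
    rw [hmul, hXY.integral_mul_eq_mul_integral
      (stmt16_int_prod hmeas hbdd c s).aestronglyMeasurable (stmt16_int_pow hmeas hbdd a (c a)).aestronglyMeasurable,
      Finset.prod_insert ha, ih, mul_comm]

end aux

set_option maxRecDepth 100000 in
theorem stmt16 {Ω : Type} [MeasurableSpace Ω] (μ : Measure Ω) [IsProbabilityMeasure μ]
    {n : ℕ} (H : Fin n → Fin n → Ω → ℝ)
    (hmeas : ∀ i j, Measurable (H i j))
    (hindep : iIndepFun
      (fun q : Fin n × Fin n => H q.1 q.2) μ)
    (hmean : ∀ i j, ∫ ω, H i j ω ∂μ = 0)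
    (σ B : ℝ)
    (hvar : ∀ i j, ∫ ω, (H i j ω) ^ 2 ∂μ ≤ σ ^ 2)
    (hbdd : ∀ i j, ∀ᵐ ω ∂μ, |H i j ω| ≤ B)
    (k p : ℕ) (hk : 2 ≤ k) (hp : 1 ≤ p)
    (js : Fin p → Fin (k + 1) → Fin n)
    (L : ℕ)
    (hL : {ab : Fin n × Fin n | ∃ (r : Fin p) (l : Fin k),
      (js r l.castSucc, js r l.succ) = ab}.ncard = L)
    (hmult : ∀ (r : Fin p) (l : Fin k),
      2 ≤ Set.ncard {q : Fin p × Fin k |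
        (js q.1 q.2.castSucc, js q.1 q.2.succ)
          = (js r l.castSucc, js r l.succ)}) :
    |∫ ω, ∏ r : Fin p,
        ((∏ l : Fin k, H (js r l.castSucc) (js r l.succ) ω)
          - ∫ ω', ∏ l : Fin k, H (js r l.castSucc) (js r l.succ) ω' ∂μ) ∂μ|
      ≤ 2 ^ p * σ ^ (2 * L) * B ^ (p * k - 2 * L) := by
  classical
  -- basic notation
  obtain ⟨e, he⟩ : ∃ e : Fin p × Fin k → Fin n × Fin n,
      e = fun x => (js x.1 x.2.castSucc, js x.1 x.2.succ) := ⟨_, rfl⟩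
  obtain ⟨Q, hQ⟩ : ∃ Q : Finset (Fin n × Fin n), Q = Finset.image e Finset.univ := ⟨_, rfl⟩
  obtain ⟨ν, hν⟩ : ∃ ν : Fin p → Fin n × Fin n → ℕ,
      ν = fun r q => (Finset.univ.filter fun l : Fin k => e (r, l) = q).card := ⟨_, rfl⟩
  obtain ⟨M, hM⟩ : ∃ M : Fin n × Fin n → ℕ, M = fun q => ∑ r, ν r q := ⟨_, rfl⟩
  obtain ⟨I, hI⟩ : ∃ I : Fin n × Fin n → ℕ → ℝ,
      I = fun q m => ∫ ω, H q.1 q.2 ω ^ m ∂μ := ⟨_, rfl⟩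
  -- basic facts
  have hQL : Q.card = L := by
    have hset : {ab : Fin n × Fin n | ∃ (r : Fin p) (l : Fin k),
        (js r l.castSucc, js r l.succ) = ab} = ↑Q := by
      ext ab
      simp only [hQ, Finset.coe_image, Set.mem_setOf_eq, Set.mem_image, Finset.coe_univ,
        Set.mem_univ, true_and, he, Prod.exists]
    rw [hset, Set.ncard_coe_finset] at hL
    exact hL
  have hB0 : 0 ≤ B := by
    have := (hbdd (js ⟨0, hp⟩ 0) (js ⟨0, hp⟩ 0)).exists
    obtain ⟨ω, hω⟩ := this
    exact le_trans (abs_nonneg _) hω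
  have hσ0 : 0 ≤ σ ^ 2 := by
    refine le_trans ?_ (hvar (js ⟨0, hp⟩ 0) (js ⟨0, hp⟩ 0))
    exact integral_nonneg fun ω => sq_nonneg _
  have hM2 : ∀ q ∈ Q, 2 ≤ M q := by
    intro q hq
    rw [hQ, Finset.mem_image] at hq
    obtain ⟨x, -, hx⟩ := hq
    have h := hmult x.1 x.2
    have hcard : {y : Fin p × Fin k | e y = q}.ncard = M q := by
      rw [Set.ncard_eq_toFinset_card', Set.toFinset_setOf, hM]
      rw [Finset.card_filter]
      rw [Fintype.sum_prod_type]
      simp only [hν, Finset.card_filter]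
    have hseteq : {y : Fin p × Fin k |
        (js y.1 y.2.castSucc, js y.1 y.2.succ) = (js x.1 x.2.castSucc, js x.1 x.2.succ)}
        = {y : Fin p × Fin k | e y = q} := by
      ext y; simp only [Set.mem_setOf_eq, he]
      rw [show (js x.1 x.2.castSucc, js x.1 x.2.succ) = q from by rw [← hx, he]]
    rw [hseteq, hcard] at h
    exact h
  have hMsum : ∑ q ∈ Q, M q = p * k := by
    have hrow : ∀ r : Fin p, ∑ q ∈ Q, ν r q = k := by
      intro r
      have h := Finset.card_eq_sum_card_fiberwise
        (f := fun l : Fin k => e (r, l)) (s := Finset.univ) (t := Q)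
        (fun l _ => by rw [hQ]; exact Finset.mem_image.2 ⟨(r, l), Finset.mem_univ _, rfl⟩)
      simp only [Finset.card_univ, Fintype.card_fin] at h
      rw [hν]
      exact h.symm
    simp only [hM]
    rw [Finset.sum_comm]
    simp only [hrow, Finset.sum_const, Finset.card_univ, Fintype.card_fin, smul_eq_mul, mul_comm]
  -- moments
  have hI0 : ∀ q, I q 0 = 1 := by intro q; simp [hI]
  have hI1 : ∀ q, I q 1 = 0 := by intro q; simp [hI, hmean]
  have hIB : ∀ q m, |I q m| ≤ B ^ m := by
    intro q m
    rw [hI, ← Real.norm_eq_abs]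
    have := norm_integral_le_of_norm_le_const (μ := μ)
      (f := fun ω => H q.1 q.2 ω ^ m) (C := B ^ m) ?_
    · simpa using this
    · filter_upwards [hbdd q.1 q.2] with ω hω
      rw [Real.norm_eq_abs, abs_pow]
      exact pow_le_pow_left₀ (abs_nonneg _) hω m
  have hIσ : ∀ q m, 2 ≤ m → |I q m| ≤ σ ^ 2 * B ^ (m - 2) := by
    intro q m hm
    have h1 : |I q m| ≤ ∫ ω, |H q.1 q.2 ω ^ m| ∂μ := by
      rw [hI, ← Real.norm_eq_abs]
      simpa [Real.norm_eq_abs] using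
        norm_integral_le_integral_norm (μ := μ) (fun ω => H q.1 q.2 ω ^ m)
    have h2 : ∫ ω, |H q.1 q.2 ω ^ m| ∂μ ≤ ∫ ω, H q.1 q.2 ω ^ 2 * B ^ (m - 2) ∂μ := by
      refine integral_mono_ae ((stmt16_int_pow hmeas hbdd q m).abs)
        ((stmt16_int_pow hmeas hbdd q 2).mul_const _) ?_
      filter_upwards [hbdd q.1 q.2] with ω hω
      have : |H q.1 q.2 ω ^ m| = H q.1 q.2 ω ^ 2 * |H q.1 q.2 ω| ^ (m - 2) := by
        rw [abs_pow, ← sq_abs, ← pow_add]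
        congr 1
        omega
      rw [this]
      exact mul_le_mul_of_nonneg_left
        (pow_le_pow_left₀ (abs_nonneg _) hω _) (sq_nonneg _)
    have h3 : ∫ ω, H q.1 q.2 ω ^ 2 * B ^ (m - 2) ∂μ ≤ σ ^ 2 * B ^ (m - 2) := by
      rw [integral_mul_const]
      exact mul_le_mul_of_nonneg_right (hvar q.1 q.2) (pow_nonneg hB0 _)
    linarith
  -- the key single-pair bound
  have key : ∀ q ∈ Q, ∀ (a : ℕ) (s : Finset (Fin p)) (b : Fin p → ℕ),
      a + ∑ r ∈ s, b r = M q →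
      |I q a| * ∏ r ∈ s, |I q (b r)| ≤ σ ^ 2 * B ^ (M q - 2) := by
    intro q hq a s b hsum
    have hT0 : 0 ≤ σ ^ 2 * B ^ (M q - 2) := mul_nonneg hσ0 (pow_nonneg hB0 _)
    by_cases ha1 : a = 1
    · subst ha1; rw [hI1, abs_zero, zero_mul]; exact hT0
    by_cases hb1 : ∃ r ∈ s, b r = 1
    · obtain ⟨r, hr, hbr⟩ := hb1
      rw [Finset.prod_eq_zero hr (by rw [hbr, hI1, abs_zero]), mul_zero]
      exact hT0
    push_neg at hb1
    by_cases ha0 : a = 0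
    · -- a = 0: find r0 with b r0 ≥ 2
      subst ha0
      have hMq := hM2 q hq
      have hpos : 0 < ∑ r ∈ s, b r := by omega
      obtain ⟨r0, hr0, hbr0⟩ := Finset.exists_ne_zero_of_sum_ne_zero (by omega :
        ∑ r ∈ s, b r ≠ 0)
      have h2 : 2 ≤ b r0 := by
        have := hb1 r0 hr0; omega
      rw [hI0, abs_one, one_mul, ← Finset.mul_prod_erase s _ hr0]
      have hrest : ∏ r ∈ s.erase r0, |I q (b r)| ≤ ∏ r ∈ s.erase r0, B ^ (b r) :=
        Finset.prod_le_prod (fun r _ => abs_nonneg _) (fun r _ => hIB q (b r))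
      have hmain : |I q (b r0)| ≤ σ ^ 2 * B ^ (b r0 - 2) := hIσ q (b r0) h2
      calc |I q (b r0)| * ∏ r ∈ s.erase r0, |I q (b r)|
          ≤ (σ ^ 2 * B ^ (b r0 - 2)) * ∏ r ∈ s.erase r0, B ^ (b r) := by
            refine mul_le_mul hmain hrest
              (Finset.prod_nonneg fun r _ => abs_nonneg _)
              (mul_nonneg hσ0 (pow_nonneg hB0 _))
        _ = σ ^ 2 * B ^ (M q - 2) := by
            rw [Finset.prod_pow_eq_pow_sum, mul_assoc, ← pow_add]
            congr 2
            have := Finset.add_sum_erase s b hr0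
            omega
    · have h2 : 2 ≤ a := by omega
      have hrest : ∏ r ∈ s, |I q (b r)| ≤ ∏ r ∈ s, B ^ (b r) :=
        Finset.prod_le_prod (fun r _ => abs_nonneg _) (fun r _ => hIB q (b r))
      calc |I q a| * ∏ r ∈ s, |I q (b r)|
          ≤ (σ ^ 2 * B ^ (a - 2)) * ∏ r ∈ s, B ^ (b r) := by
            refine mul_le_mul (hIσ q a h2) hrest
              (Finset.prod_nonneg fun r _ => abs_nonneg _)
              (mul_nonneg hσ0 (pow_nonneg hB0 _))
        _ = σ ^ 2 * B ^ (M q - 2) := by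
            rw [Finset.prod_pow_eq_pow_sum, mul_assoc, ← pow_add]
            congr 2
            omega
  -- path products
  obtain ⟨g, hg⟩ : ∃ g : Fin p → Ω → ℝ,
      g = fun r ω => ∏ l : Fin k, H (js r l.castSucc) (js r l.succ) ω := ⟨_, rfl⟩
  have hgq : ∀ (t : Finset (Fin p)) (ω : Ω),
      ∏ r ∈ t, g r ω = ∏ q ∈ Q, H q.1 q.2 ω ^ (∑ r ∈ t, ν r q) := by
    intro t ω
    have h1 : ∀ r : Fin p, g r ω = ∏ q ∈ Q, H q.1 q.2 ω ^ ν r q := by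
      intro r
      have hmap : ∀ l : Fin k, l ∈ (Finset.univ : Finset (Fin k)) →
          (fun l => e (r, l)) l ∈ Q := fun l _ => by
        rw [hQ]; exact Finset.mem_image.2 ⟨(r, l), Finset.mem_univ _, rfl⟩
      have h2 := Finset.prod_fiberwise_of_maps_to hmap
        (fun l : Fin k => H (e (r, l)).1 (e (r, l)).2 ω)
      calc g r ω = ∏ l : Fin k, H (e (r, l)).1 (e (r, l)).2 ω := by
            rw [hg, he]
        _ = ∏ q ∈ Q, ∏ l ∈ Finset.univ.filter (fun l : Fin k => e (r, l) = q),
              H (e (r, l)).1 (e (r, l)).2 ω := h2.symm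
        _ = ∏ q ∈ Q, H q.1 q.2 ω ^ ν r q := by
            refine Finset.prod_congr rfl fun q _ => ?_
            have h3 : ∏ l ∈ Finset.univ.filter (fun l : Fin k => e (r, l) = q),
                H (e (r, l)).1 (e (r, l)).2 ω
                = ∏ _l ∈ Finset.univ.filter (fun l : Fin k => e (r, l) = q),
                  H q.1 q.2 ω :=
              Finset.prod_congr rfl fun l hl => by
                rw [(Finset.mem_filter.1 hl).2]
            rw [h3, Finset.prod_const, hν]
    calc ∏ r ∈ t, g r ω = ∏ r ∈ t, ∏ q ∈ Q, H q.1 q.2 ω ^ ν r q :=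
          Finset.prod_congr rfl fun r _ => h1 r
      _ = ∏ q ∈ Q, ∏ r ∈ t, H q.1 q.2 ω ^ ν r q := Finset.prod_comm
      _ = ∏ q ∈ Q, H q.1 q.2 ω ^ (∑ r ∈ t, ν r q) := by
          refine Finset.prod_congr rfl fun q _ => ?_
          rw [Finset.prod_pow_eq_pow_sum]
  have hgintt : ∀ t : Finset (Fin p), Integrable (fun ω => ∏ r ∈ t, g r ω) μ := by
    intro t
    have h := funext (hgq t)
    rw [h]
    exact stmt16_int_prod hmeas hbdd _ _
  have hgE : ∀ t : Finset (Fin p),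
      ∫ ω, ∏ r ∈ t, g r ω ∂μ = ∏ q ∈ Q, I q (∑ r ∈ t, ν r q) := by
    intro t
    simp only [hgq]
    rw [stmt16_fact hmeas hindep hbdd (fun q => ∑ r ∈ t, ν r q) Q, hI]
  have hc : ∀ r : Fin p,
      (∫ ω', ∏ l : Fin k, H (js r l.castSucc) (js r l.succ) ω' ∂μ)
        = ∏ q ∈ Q, I q (ν r q) := by
    intro r
    have h := hgE {r}
    simp only [Finset.prod_singleton, Finset.sum_singleton] at h
    rw [← h, hg]
  -- expansion
  have hgoal : (fun ω => ∏ r : Fin p,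
        ((∏ l : Fin k, H (js r l.castSucc) (js r l.succ) ω)
          - ∫ ω', ∏ l : Fin k, H (js r l.castSucc) (js r l.succ) ω' ∂μ))
      = fun ω => ∑ t : Finset (Fin p), (∏ r ∈ t, g r ω) *
          ∏ r ∈ tᶜ, (-(∏ q ∈ Q, I q (ν r q))) := by
    funext ω
    rw [← Fintype.prod_add]
    refine Finset.prod_congr rfl fun r _ => ?_
    rw [hg, ← hc r, sub_eq_add_neg]
  have hsum : (∫ ω, ∏ r : Fin p,
        ((∏ l : Fin k, H (js r l.castSucc) (js r l.succ) ω)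
          - ∫ ω', ∏ l : Fin k, H (js r l.castSucc) (js r l.succ) ω' ∂μ) ∂μ)
      = ∑ t : Finset (Fin p), (∏ q ∈ Q, I q (∑ r ∈ t, ν r q)) *
          ∏ r ∈ tᶜ, (-(∏ q ∈ Q, I q (ν r q))) := by
    rw [hgoal, integral_finset_sum _ (fun t _ => (hgintt t).mul_const _)]
    refine Finset.sum_congr rfl fun t _ => ?_
    rw [integral_mul_const, hgE t]
  -- per-term bound
  have hbound : ∀ t : Finset (Fin p),
      |(∏ q ∈ Q, I q (∑ r ∈ t, ν r q)) * ∏ r ∈ tᶜ, (-(∏ q ∈ Q, I q (ν r q)))|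
        ≤ σ ^ (2 * L) * B ^ (p * k - 2 * L) := by
    intro t
    have hexp : ∑ q ∈ Q, (M q - 2) = p * k - 2 * L := by
      have h2 : ∑ q ∈ Q, (M q - 2) + 2 * L = p * k := by
        rw [← hMsum, ← hQL]
        rw [show 2 * Q.card = ∑ _q ∈ Q, 2 by
          rw [Finset.sum_const, smul_eq_mul, mul_comm]]
        rw [← Finset.sum_add_distrib]
        exact Finset.sum_congr rfl fun q hq => by
          have := hM2 q hq; omega
      omega
    calc |(∏ q ∈ Q, I q (∑ r ∈ t, ν r q)) * ∏ r ∈ tᶜ, (-(∏ q ∈ Q, I q (ν r q)))|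
        = ∏ q ∈ Q, (|I q (∑ r ∈ t, ν r q)| * ∏ r ∈ tᶜ, |I q (ν r q)|) := by
          rw [abs_mul, Finset.abs_prod, Finset.abs_prod, Finset.prod_mul_distrib]
          congr 1
          calc ∏ r ∈ tᶜ, |(-(∏ q ∈ Q, I q (ν r q)))|
              = ∏ r ∈ tᶜ, ∏ q ∈ Q, |I q (ν r q)| :=
                Finset.prod_congr rfl fun r _ => by rw [abs_neg, Finset.abs_prod]
            _ = ∏ q ∈ Q, ∏ r ∈ tᶜ, |I q (ν r q)| := Finset.prod_comm
      _ ≤ ∏ q ∈ Q, (σ ^ 2 * B ^ (M q - 2)) := by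
          refine Finset.prod_le_prod
            (fun q _ => mul_nonneg (abs_nonneg _)
              (Finset.prod_nonneg fun r _ => abs_nonneg _)) (fun q hq => ?_)
          refine key q hq _ tᶜ _ ?_
          rw [Finset.sum_add_sum_compl, hM]
      _ = σ ^ (2 * L) * B ^ (p * k - 2 * L) := by
          rw [Finset.prod_mul_distrib, Finset.prod_const, hQL,
            Finset.prod_pow_eq_pow_sum, hexp, ← pow_mul]
  -- conclude
  rw [hsum]
  calc |∑ t : Finset (Fin p), (∏ q ∈ Q, I q (∑ r ∈ t, ν r q)) *
          ∏ r ∈ tᶜ, (-(∏ q ∈ Q, I q (ν r q)))|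
      ≤ ∑ t : Finset (Fin p), |(∏ q ∈ Q, I q (∑ r ∈ t, ν r q)) *
          ∏ r ∈ tᶜ, (-(∏ q ∈ Q, I q (ν r q)))| := Finset.abs_sum_le_sum_abs _ _
    _ ≤ ∑ _t : Finset (Fin p), σ ^ (2 * L) * B ^ (p * k - 2 * L) :=
        Finset.sum_le_sum fun t _ => hbound t
    _ = 2 ^ p * σ ^ (2 * L) * B ^ (p * k - 2 * L) := by
        rw [Finset.sum_const, Finset.card_univ, Fintype.card_finset, Fintype.card_fin,
          nsmul_eq_mul, mul_assoc]
        push_cast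
        ring
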